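/- In the construction R' = [[R, −2],[δ, R_S]], C' = [[C, δ],[−2, C_S]]: if the column player's strategy y in an ε'-WNE (with ε' < 2ε/3, ε ≤ δ ≤ 1/2) puts positive total mass y_L on the first N coordinates, then y_L > 2/3; symmetrically for the row player's mass x_L on the first N coordinates. -/
import Mathlib

open Finset

def InSimplex {I : Type*} [Fintype I] (x : I → ℝ) : Prop :=
  (∀ i, 0 ≤ x i) ∧ ∑ i, x i = 1

def IsWNE {I : Type*} [Fintype I] (R C : Matrix I I ℝ) (ε : ℝ)
    (x y : I → ℝ) : Prop :=
  (∀ i, 0 < x i → ∀ k, (∑ j, R k j * y j) - ε ≤ ∑ j, R i j * y j) ∧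
  (∀ j, 0 < y j → ∀ k, (∑ i, x i * C i k) - ε ≤ ∑ i, x i * C i j)

def combR {N K : ℕ} (R : Matrix (Fin N) (Fin N) ℝ)
    (RS : Matrix (Fin K) (Fin K) ℝ) (δ : ℝ) :
    Matrix (Fin N ⊕ Fin K) (Fin N ⊕ Fin K) ℝ := fun i j =>
  match i, j with
  | .inl a, .inl b => R a b
  | .inl _, .inr _ => -2
  | .inr _, .inl _ => δ
  | .inr a, .inr b => RS a b

def combC {N K : ℕ} (C : Matrix (Fin N) (Fin N) ℝ)
    (CS : Matrix (Fin K) (Fin K) ℝ) (δ : ℝ) :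
    Matrix (Fin N ⊕ Fin K) (Fin N ⊕ Fin K) ℝ := fun i j =>
  match i, j with
  | .inl a, .inl b => C a b
  | .inl _, .inr _ => δ
  | .inr _, .inl _ => -2
  | .inr a, .inr b => CS a b

/-- in an ε'-WNE of the combined game (ε' < 2ε/3, ε ≤ δ ≤ 1/2),
if a player puts positive mass on the first N coordinates, that mass
exceeds 2/3. -/
theorem combined_game_mass_dichotomy {N K : ℕ}
    (R C : Matrix (Fin N) (Fin N) ℝ) (RS CS : Matrix (Fin K) (Fin K) ℝ)
    (ε δ : ℝ) (hεδ : ε ≤ δ) (hδ : δ ≤ 1/2) (hε : 0 < ε)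
    (hR : ∀ i j, R i j ∈ Set.Icc (-1:ℝ) 1) (hC : ∀ i j, C i j ∈ Set.Icc (-1:ℝ) 1)
    (hRS : ∀ i j, RS i j ∈ Set.Icc (-1:ℝ) 1) (hCS : ∀ i j, CS i j ∈ Set.Icc (-1:ℝ) 1)
    (hgoodR : ∀ y : Fin K → ℝ, InSimplex y → ∃ i, (1:ℝ)/2 ≤ ∑ j, RS i j * y j)
    (hgoodC : ∀ x : Fin K → ℝ, InSimplex x → ∃ j, (1:ℝ)/2 ≤ ∑ i, x i * CS i j)
    (ε' : ℝ) (hε'0 : 0 ≤ ε') (hε' : ε' < 2 * ε / 3)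
    (x y : Fin N ⊕ Fin K → ℝ) (hx : InSimplex x) (hy : InSimplex y)
    (h : IsWNE (combR R RS δ) (combC C CS δ) ε' x y) :
    (0 < (∑ a : Fin N, y (Sum.inl a)) → 2/3 < ∑ a : Fin N, y (Sum.inl a)) ∧
    (0 < (∑ a : Fin N, x (Sum.inl a)) → 2/3 < ∑ a : Fin N, x (Sum.inl a)) := by
  obtain ⟨hx0, hx1⟩ := hx
  obtain ⟨hy0, hy1⟩ := hy
  set xL := ∑ a : Fin N, x (Sum.inl a) with hxL
  set xR := ∑ b : Fin K, x (Sum.inr b) with hxR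
  set yL := ∑ a : Fin N, y (Sum.inl a) with hyL
  set yR := ∑ b : Fin K, y (Sum.inr b) with hyR
  have hxs : xL + xR = 1 := by rw [hxL, hxR, ← Fintype.sum_sum_type]; exact hx1
  have hys : yL + yR = 1 := by rw [hyL, hyR, ← Fintype.sum_sum_type]; exact hy1
  have hxL0 : 0 ≤ xL := Finset.sum_nonneg fun a _ => hx0 _
  have hxR0 : 0 ≤ xR := Finset.sum_nonneg fun a _ => hx0 _
  have hyL0 : 0 ≤ yL := Finset.sum_nonneg fun a _ => hy0 _
  have hyR0 : 0 ≤ yR := Finset.sum_nonneg fun a _ => hy0 _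
  have keyA : 0 < yL → 2/3 < xL := by
    intro hpos
    obtain ⟨b, hb⟩ : ∃ b, 0 < y (Sum.inl b) := by
      by_contra hc
      push_neg at hc
      have : yL ≤ 0 := Finset.sum_nonpos fun a _ => hc a
      linarith
    have hup : ∑ i, x i * combC C CS δ i (Sum.inl b) ≤ xL - 2 * xR := by
      rw [Fintype.sum_sum_type]
      have h1 : ∑ a : Fin N, x (Sum.inl a) * combC C CS δ (Sum.inl a) (Sum.inl b) ≤ xL := by
        rw [hxL]
        apply Finset.sum_le_sum
        intro a _
        simpa [combC] using mul_le_of_le_one_right (hx0 (Sum.inl a)) (hC a b).2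
      have h2 : ∑ i : Fin K, x (Sum.inr i) * combC C CS δ (Sum.inr i) (Sum.inl b)
          = xR * (-2) := by
        simp only [combC]
        rw [← Finset.sum_mul, ← hxR]
      linarith
    rcases eq_or_lt_of_le hxR0 with hxReq | hxRpos
    · linarith
    · obtain ⟨j, hj⟩ := hgoodC (fun i => x (Sum.inr i) / xR)
        ⟨fun i => div_nonneg (hx0 _) hxR0, by
          rw [← Finset.sum_div, ← hxR, div_self (ne_of_gt hxRpos)]⟩
      have hSj : xR / 2 ≤ ∑ i : Fin K, x (Sum.inr i) * CS i j := by
        have he : ∑ i : Fin K, x (Sum.inr i) / xR * CS i j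
            = (∑ i : Fin K, x (Sum.inr i) * CS i j) / xR := by
          rw [Finset.sum_div]
          exact Finset.sum_congr rfl fun i _ => by ring
        rw [he, le_div_iff₀ hxRpos] at hj
        linarith
      have hlow : δ * xL + xR / 2 ≤ ∑ i, x i * combC C CS δ i (Sum.inr j) := by
        rw [Fintype.sum_sum_type]
        have h1 : ∑ a : Fin N, x (Sum.inl a) * combC C CS δ (Sum.inl a) (Sum.inr j)
            = xL * δ := by
          simp only [combC]
          rw [← Finset.sum_mul, ← hxL]
        have h2 : ∑ i : Fin K, x (Sum.inr i) * combC C CS δ (Sum.inr i) (Sum.inr j)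
            = ∑ i : Fin K, x (Sum.inr i) * CS i j := by
          simp only [combC]
        rw [h1, h2]
        linarith
      have hw := h.2 (Sum.inl b) hb (Sum.inr j)
      have e1 : δ * xL + δ * xR = δ := by rw [← mul_add, hxs, mul_one]
      have e2 : δ * xR ≤ xR / 2 := by nlinarith
      linarith
  have keyB : 0 < xL → 2/3 < yL := by
    intro hpos
    obtain ⟨a, ha⟩ : ∃ a, 0 < x (Sum.inl a) := by
      by_contra hc
      push_neg at hc
      have : xL ≤ 0 := Finset.sum_nonpos fun a _ => hc a
      linarith
    have hup : ∑ j, combR R RS δ (Sum.inl a) j * y j ≤ yL - 2 * yR := by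
      rw [Fintype.sum_sum_type]
      have h1 : ∑ b : Fin N, combR R RS δ (Sum.inl a) (Sum.inl b) * y (Sum.inl b) ≤ yL := by
        rw [hyL]
        apply Finset.sum_le_sum
        intro b _
        simpa [combR] using mul_le_of_le_one_left (hy0 (Sum.inl b)) (hR a b).2
      have h2 : ∑ j : Fin K, combR R RS δ (Sum.inl a) (Sum.inr j) * y (Sum.inr j)
          = (-2) * yR := by
        simp only [combR]
        rw [← Finset.mul_sum, ← hyR]
      linarith
    rcases eq_or_lt_of_le hyR0 with hyReq | hyRpos
    · linarith
    · obtain ⟨i, hi⟩ := hgoodR (fun j => y (Sum.inr j) / yR)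
        ⟨fun j => div_nonneg (hy0 _) hyR0, by
          rw [← Finset.sum_div, ← hyR, div_self (ne_of_gt hyRpos)]⟩
      have hSi : yR / 2 ≤ ∑ j : Fin K, RS i j * y (Sum.inr j) := by
        have he : ∑ j : Fin K, RS i j * (y (Sum.inr j) / yR)
            = (∑ j : Fin K, RS i j * y (Sum.inr j)) / yR := by
          rw [Finset.sum_div]
          exact Finset.sum_congr rfl fun j _ => by ring
        rw [he, le_div_iff₀ hyRpos] at hi
        linarith
      have hlow : δ * yL + yR / 2 ≤ ∑ j, combR R RS δ (Sum.inr i) j * y j := by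
        rw [Fintype.sum_sum_type]
        have h1 : ∑ b : Fin N, combR R RS δ (Sum.inr i) (Sum.inl b) * y (Sum.inl b)
            = δ * yL := by
          simp only [combR]
          rw [← Finset.mul_sum, ← hyL]
        have h2 : ∑ j : Fin K, combR R RS δ (Sum.inr i) (Sum.inr j) * y (Sum.inr j)
            = ∑ j : Fin K, RS i j * y (Sum.inr j) := by
          simp only [combR]
        rw [h1, h2]
        linarith
      have hw := h.1 (Sum.inl a) ha (Sum.inr i)
      have e1 : δ * yL + δ * yR = δ := by rw [← mul_add, hys, mul_one]
      have e2 : δ * yR ≤ yR / 2 := by nlinarith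
      linarith
  constructor
  · intro hyp
    exact keyB (by linarith [keyA hyp])
  · intro hxp
    exact keyA (by linarith [keyB hxp])
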